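/- arXiv:2108.06402 — 4 statements merged into one kernel-verified Lean document; each statement's English description precedes it below -/
import Mathlib

section
/- Fix g₁, g₂ ∈ E₊(𝔣) generating a free rank-2 finite-index subgroup of E₊(𝔣), let i ∈ {1,2} and let l ≥ 1 be an integer. Suppose the real number Dᵢ := (2·g_i(2)^l − g_i(1)^l − g_i(3)^l)·log g₂(1) − (2·g_i(1)^l − g_i(2)^l − g_i(3)^l)·log g₂(2) is nonzero. Then, noting that x_{i,l}(0) = y_{i,l}(0) = 0, the slope of the curve 𝒞_{i,l} at t = 0 satisfies lim_{t→0⁺} y_{i,l}(t)/x_{i,l}(t) = −[(2·g_i(2)^l − g_i(1)^l − g_i(3)^l)·log g₁(1) − (2·g_i(1)^l − g_i(2)^l − g_i(3)^l)·log g₁(2)] / Dᵢ. -/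
noncomputable section

open Filter Set

/-- `ℝ³`, the target of the embedding of the totally real cubic field `F`
via its three real embeddings. -/
abbrev V3 := Fin 3 → ℝ

/-- All coordinates positive (totally positive). -/
def IsPos (x : V3) : Prop := ∀ i, 0 < x i

/-- Coordinatewise logarithm `Log`. -/
def Log3 (x : V3) : V3 := fun i => Real.log (x i)

/-- `l_i(M)`: the vector in the trace-zero hyperplane with entry `M` in place `i`
and `-M/2` in the other places. -/
def lvec (i : Fin 3) (M : ℝ) : V3 := fun j => if j = i then M else -M / 2

/-- `δ(x₁,x₂,x₃)`: sign of the determinant of the matrix with columns `x₁, x₂, x₃`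
(with `sign 0 = 0`). -/
def delta3 (x₁ x₂ x₃ : V3) : ℝ :=
  Real.sign (Matrix.det (Matrix.of fun i j : Fin 3 => ![x₁ i, x₂ i, x₃ i] j))

/-- `δ([x ∣ y]) = δ(1, x, x·y)`. -/
def deltaB (x y : V3) : ℝ := delta3 1 x (x * y)

/-- Projection `z ↦ z_ℋ = (z₁z₂z₃)^(-1/3)·z`. -/
def projH (x : V3) : V3 := fun i => (x 0 * x 1 * x 2) ^ (-(1 / 3) : ℝ) * x i

/-- Abstraction of `E₊(𝔣)`: a group of totally positive vectors of norm one whose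
`Log`-image is a full lattice in the trace-zero hyperplane `ℋ`. -/
def IsUnitLattice (E : Subgroup V3ˣ) : Prop :=
  (∀ u ∈ E, IsPos (u : V3)) ∧
  (∀ u ∈ E, Log3 (u : V3) 0 + Log3 (u : V3) 1 + Log3 (u : V3) 2 = 0) ∧
  ∃ u ∈ E, ∃ v ∈ E, LinearIndependent ℝ ![Log3 (u : V3), Log3 (v : V3)] ∧
    ∀ w ∈ E, ∃ m n : ℤ, Log3 (w : V3) = (m : ℝ) • Log3 (u : V3) + (n : ℝ) • Log3 (v : V3)

/-- `⟨g₁, g₂⟩` is a subgroup of `E`, free of rank `2` and of finite index in `E`. -/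
def FreeRank2FinIndex (E : Subgroup V3ˣ) (g₁ g₂ : V3ˣ) : Prop :=
  g₁ ∈ E ∧ g₂ ∈ E ∧
  (∀ m n : ℤ, g₁ ^ m * g₂ ^ n = 1 → m = 0 ∧ n = 0) ∧
  (Subgroup.closure {g₁, g₂}).relIndex E ≠ 0

/-- Open simplicial cone on one generator (a ray). -/
def cone1 (v : V3) : Set V3 := {x | ∃ c : ℝ, 0 < c ∧ x = c • v}

/-- Open simplicial cone on two generators. -/
def cone2 (v w : V3) : Set V3 := {x | ∃ c d : ℝ, 0 < c ∧ 0 < d ∧ x = c • v + d • w}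

/-- Open simplicial cone on three generators. -/
def cone3 (v w z : V3) : Set V3 :=
  {x | ∃ c d e : ℝ, 0 < c ∧ 0 < d ∧ 0 < e ∧ x = c • v + d • w + e • z}

/-- `C([x ∣ y]) = C(1, x, x·y)`. -/
def coneB (x y : V3) : Set V3 := cone3 1 x (x * y)

/-- The first standard basis vector of `ℝ³`. -/
def eOne : V3 := ![1, 0, 0]

/-- `C̄_{e₁}`-operation: the points of `ℝ³` brought into `S` by every sufficiently
small perturbation by `e₁`. -/
def closE1 (S : Set V3) : Set V3 :=
  {x | ∃ ε : ℝ, 0 < ε ∧ ∀ h : ℝ, 0 < h → h < ε → x + h • eOne ∈ S}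

/-- `C̄_{e₁}([x ∣ y])`. -/
def coneBbar (x y : V3) : Set V3 := closE1 (coneB x y)

/-- Multiplicative translate `v·S` of a subset of `ℝ³` (coordinatewise product). -/
def mulSet (v : V3) (S : Set V3) : Set V3 := (fun x => v * x) '' S

/-- The coordinates of `Log(α_ℋ)`. -/
def logHc (α : V3) (i : Fin 3) : ℝ :=
  Real.log (α i) - (Real.log (α 0) + Real.log (α 1) + Real.log (α 2)) / 3

/-- The projection `φ_{(g₁,g₂)} : ℝ₊³ → ℝ²`, given by the coordinates of `Log(α_ℋ)`
in the basis `(Log g₁, Log g₂)` of `ℋ` (the explicit formula of the paper). -/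
def phi (g₁ g₂ α : V3) : ℝ × ℝ :=
  ((logHc α 1 * Real.log (g₂ 0) - logHc α 0 * Real.log (g₂ 1)) /
      (Real.log (g₂ 0) * Real.log (g₁ 1) - Real.log (g₂ 1) * Real.log (g₁ 0)),
    (logHc α 1 * Real.log (g₁ 0) - logHc α 0 * Real.log (g₁ 1)) /
      (Real.log (g₁ 0) * Real.log (g₂ 1) - Real.log (g₁ 1) * Real.log (g₂ 0)))

/-- The straight segment `L(t)` from `(1,1,1)` to `v`. -/
def seg (v : V3) (t : ℝ) : V3 := fun j => 1 + t * (v j - 1)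

/-- `x_{i,l}(t)`: first coordinate of `𝒞_{i,l}(t) = φ_{(g₁,g₂)}(L_{i,l}(t))`,
where `g` is `g₁` or `g₂`. -/
def xC (g₁ g₂ g : V3) (l : ℕ) (t : ℝ) : ℝ := (phi g₁ g₂ (seg (g ^ l) t)).1

/-- `y_{i,l}(t)`: second coordinate of `𝒞_{i,l}(t)`. -/
def yC (g₁ g₂ g : V3) (l : ℕ) (t : ℝ) : ℝ := (phi g₁ g₂ (seg (g ^ l) t)).2

/-- The Colmez domain `ℬ = C̄_{e₁}([ε₁∣ε₂]) ∪ C̄_{e₁}([ε₂∣ε₁])`. -/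
def Bbar (ε₁ ε₂ : V3) : Set V3 := coneBbar ε₁ ε₂ ∪ coneBbar ε₂ ε₁

/-- The explicit cone decomposition of `ℬ` with chosen boundary cones. -/
def BsetC (ε₁ ε₂ : V3) : Set V3 :=
  cone1 1 ∪ cone2 1 ε₁ ∪ cone2 1 ε₂ ∪ cone2 1 (ε₁ * ε₂) ∪
    cone3 1 ε₁ (ε₁ * ε₂) ∪ cone3 1 ε₂ (ε₁ * ε₂)

/-- The explicit cone decomposition of `ℬ₁`. -/
def B1setC (ε₂ π : V3) : Set V3 :=
  cone1 π ∪ cone2 π (ε₂ * π) ∪ cone2 1 π ∪ cone2 1 (ε₂ * π) ∪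
    cone3 1 ε₂ (ε₂ * π) ∪ cone3 1 π (ε₂ * π)

/-- The explicit cone decomposition of `ℬ₂`. -/
def B2setC (ε₁ π : V3) : Set V3 :=
  cone1 π ∪ cone2 π (ε₁ * π) ∪ cone2 1 π ∪ cone2 1 (ε₁ * π) ∪
    cone3 1 ε₁ (ε₁ * π) ∪ cone3 1 π (ε₁ * π)


/-! ### Auxiliary lemmas -/

lemma unit_coord_ne (u : V3ˣ) (i : Fin 3) : (u : V3) i ≠ 0 := by
  have h := congrFun u.val_inv i
  intro h0
  rw [Pi.mul_apply, h0, zero_mul] at h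
  exact zero_ne_one h

lemma log3_mul' (u v : V3ˣ) : Log3 ((u*v : V3ˣ) : V3) = Log3 (u : V3) + Log3 (v : V3) := by
  funext i
  simp only [Log3, Units.val_mul, Pi.mul_apply, Pi.add_apply]
  exact Real.log_mul (unit_coord_ne u i) (unit_coord_ne v i)

def logU : V3ˣ →* Multiplicative V3 :=
  { toFun := fun u => Multiplicative.ofAdd (Log3 (u : V3))
    map_one' := by
      simp only [Units.val_one]
      congr 1
      funext i
      simp [Log3]
    map_mul' := fun u v => by
      rw [log3_mul']
      rfl }

lemma log3_zpow (u : V3ˣ) (m : ℤ) : Log3 ((u ^ m : V3ˣ) : V3) = (m : ℝ) • Log3 (u : V3) := by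
  have h := map_zpow logU u m
  have h2 : Log3 ((u ^ m : V3ˣ) : V3) = m • Log3 (u : V3) := by
    have := congrArg Multiplicative.toAdd h
    simpa [logU, toAdd_zpow] using this
  rw [h2, Int.cast_smul_eq_zsmul]

lemma sq_one_of_log3_zero (u : V3ˣ) (h : Log3 (u : V3) = 0) : u * u = 1 := by
  ext i
  have hi := congrFun h i
  simp only [Log3, Pi.zero_apply] at hi
  rcases Real.log_eq_zero.mp hi with h0 | h1 | h2
  · exact absurd h0 (unit_coord_ne u i)
  · simp [Units.val_mul, Pi.mul_apply, h1]
  · simp [Units.val_mul, Pi.mul_apply, h2]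

lemma v3_ext (x : V3) (h0 : x 0 = 0) (h1 : x 1 = 0) (h2 : x 2 = 0) : x = 0 := by
  funext i
  fin_cases i
  · exact h0
  · exact h1
  · exact h2

lemma keyD (E : Subgroup V3ˣ) (hE : IsUnitLattice E) (g₁ g₂ : V3ˣ)
    (hfree : FreeRank2FinIndex E g₁ g₂) :
    Real.log ((g₂ : V3) 0) * Real.log ((g₁ : V3) 1) -
      Real.log ((g₂ : V3) 1) * Real.log ((g₁ : V3) 0) ≠ 0 := by
  obtain ⟨hpos, htr, u, hu, v, hv, hind, hlat⟩ := hE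
  obtain ⟨hg1E, hg2E, hrel, _⟩ := hfree
  intro hd
  set w₁ := Log3 ((g₁ : V3)) with hw₁
  set w₂ := Log3 ((g₂ : V3)) with hw₂
  set Lu := Log3 ((u : V3)) with hLu
  set Lv := Log3 ((v : V3)) with hLv
  obtain ⟨m₁, n₁, h1⟩ := hlat g₁ hg1E
  obtain ⟨m₂, n₂, h2⟩ := hlat g₂ hg2E
  rw [← hw₁] at h1
  rw [← hw₂] at h2
  have ht1 := htr g₁ hg1E
  have ht2 := htr g₂ hg2E
  rw [← hw₁] at ht1
  rw [← hw₂] at ht2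
  have hd' : w₂ 0 * w₁ 1 - w₂ 1 * w₁ 0 = 0 := hd
  have hLI : ∀ c d : ℝ, c • Lu + d • Lv = 0 → c = 0 ∧ d = 0 := by
    intro c d hcd
    have := Fintype.linearIndependent_iff.mp hind ![c, d] ?_
    · exact ⟨this 0, this 1⟩
    · rw [Fin.sum_univ_two]
      simpa using hcd
  have relzero : ∀ p q : ℤ, (p : ℝ) • w₁ + (q : ℝ) • w₂ = 0 → p = 0 ∧ q = 0 := by
    intro p q h
    have hlog : Log3 ((g₁ ^ p * g₂ ^ q : V3ˣ) : V3) = 0 := by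
      rw [log3_mul', log3_zpow, log3_zpow, ← hw₁, ← hw₂, h]
    have hsq := sq_one_of_log3_zero _ hlog
    have hmul : g₁ ^ (2 * p) * g₂ ^ (2 * q) = 1 := by
      rw [two_mul, two_mul, zpow_add, zpow_add,
        mul_mul_mul_comm (g₁ ^ p) (g₁ ^ p) (g₂ ^ q) (g₂ ^ q)]
      exact hsq
    have := hrel _ _ hmul
    omega
  by_cases hr : m₁ * n₂ - m₂ * n₁ = 0
  · have hcast : (m₁ : ℝ) * n₂ - m₂ * n₁ = 0 := by exact_mod_cast hr
    have e1 : ((n₂ : ℤ) : ℝ) • w₁ + ((-n₁ : ℤ) : ℝ) • w₂ = 0 := by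
      rw [h1, h2]
      push_cast
      match_scalars <;> linarith [hcast, mul_comm (m₁:ℝ) (n₂:ℝ), mul_comm (m₂:ℝ) (n₁:ℝ)]
    obtain ⟨hn₂, hn₁⟩ := relzero _ _ e1
    have e2 : ((m₂ : ℤ) : ℝ) • w₁ + ((-m₁ : ℤ) : ℝ) • w₂ = 0 := by
      rw [h1, h2]
      push_cast
      match_scalars <;> linarith [hcast, mul_comm (m₁:ℝ) (n₂:ℝ), mul_comm (m₂:ℝ) (n₁:ℝ)]
    obtain ⟨hm₂, hm₁⟩ := relzero _ _ e2
    have hw1z : w₁ = 0 := by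
      rw [h1, show m₁ = 0 by omega, show n₁ = 0 by omega]
      simp
    have := relzero 1 0 (by rw [hw1z]; simp)
    exact one_ne_zero this.1
  · have hV1 : w₂ 1 • w₁ - w₁ 1 • w₂ = 0 := by
      apply v3_ext <;>
        simp only [Pi.sub_apply, Pi.smul_apply, smul_eq_mul]
      · linear_combination -hd'
      · ring
      · linear_combination w₂ 1 * ht1 - w₁ 1 * ht2 + hd'
    have hV0 : w₂ 0 • w₁ - w₁ 0 • w₂ = 0 := by
      apply v3_ext <;>
        simp only [Pi.sub_apply, Pi.smul_apply, smul_eq_mul]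
      · ring
      · linear_combination hd'
      · linear_combination w₂ 0 * ht1 - w₁ 0 * ht2 - hd'
    have hx1 : w₂ 1 • w₁ - w₁ 1 • w₂ =
        (w₂ 1 * m₁ - w₁ 1 * m₂) • Lu + (w₂ 1 * n₁ - w₁ 1 * n₂) • Lv := by
      rw [h1, h2]; module
    have hx0 : w₂ 0 • w₁ - w₁ 0 • w₂ =
        (w₂ 0 * m₁ - w₁ 0 * m₂) • Lu + (w₂ 0 * n₁ - w₁ 0 * n₂) • Lv := by
      rw [h1, h2]; module
    rw [hx1] at hV1
    rw [hx0] at hV0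
    obtain ⟨hc1a, hc1b⟩ := hLI _ _ hV1
    obtain ⟨hc0a, hc0b⟩ := hLI _ _ hV0
    have hrR : ((m₁ * n₂ - m₂ * n₁ : ℤ) : ℝ) ≠ 0 := by exact_mod_cast hr
    have hw11 : w₁ 1 = 0 := by
      have h0 : ((m₁ * n₂ - m₂ * n₁ : ℤ) : ℝ) * w₁ 1 = 0 := by
        push_cast
        linear_combination (n₁ : ℝ) * hc1a - (m₁ : ℝ) * hc1b
      exact (mul_eq_zero.mp h0).resolve_left hrR
    have hw10 : w₁ 0 = 0 := by
      have h0 : ((m₁ * n₂ - m₂ * n₁ : ℤ) : ℝ) * w₁ 0 = 0 := by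
        push_cast
        linear_combination (n₁ : ℝ) * hc0a - (m₁ : ℝ) * hc0b
      exact (mul_eq_zero.mp h0).resolve_left hrR
    have hw1z : w₁ = 0 := by
      refine v3_ext _ hw10 hw11 ?_
      linarith
    have := hLI (m₁ : ℝ) (n₁ : ℝ) (by rw [← h1, hw1z])
    have hm₁ : m₁ = 0 := by exact_mod_cast this.1
    have hn₁ : n₁ = 0 := by exact_mod_cast this.2
    apply hr
    rw [hm₁, hn₁]
    ring

lemma slopelog (c : ℝ) :
    Tendsto (fun t => Real.log (1 + t * c) / t) (nhdsWithin (0:ℝ) (Ioi 0)) (nhds c) := by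
  have h1 : HasDerivAt (fun t : ℝ => 1 + t * c) c 0 := by
    simpa using ((hasDerivAt_id (0:ℝ)).mul_const c).const_add 1
  have h2 : HasDerivAt (fun t : ℝ => Real.log (1 + t * c)) c 0 := by
    have := h1.log (by norm_num)
    simpa using this
  have h4 := (hasDerivAt_iff_tendsto_slope.mp h2).mono_left
    (nhdsWithin_mono _ (fun x hx => ne_of_gt hx))
  apply h4.congr
  intro t
  simp [slope_def_field]

lemma slopeA (v : V3) (i : Fin 3) :
    Tendsto (fun t => logHc (seg v t) i / t) (nhdsWithin (0:ℝ) (Ioi 0))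
      (nhds ((v i - 1) - ((v 0 - 1) + (v 1 - 1) + (v 2 - 1)) / 3)) := by
  have key : ∀ t : ℝ, logHc (seg v t) i / t =
      Real.log (1 + t * (v i - 1)) / t -
        (Real.log (1 + t * (v 0 - 1)) / t + Real.log (1 + t * (v 1 - 1)) / t +
          Real.log (1 + t * (v 2 - 1)) / t) / 3 := by
    intro t
    simp only [logHc, seg]
    ring
  simp only [key]
  exact ((slopelog (v i - 1)).sub
    ((((slopelog (v 0 - 1)).add (slopelog (v 1 - 1))).add (slopelog (v 2 - 1))).div_const 3))

lemma quot_eq (P Q d t : ℝ) (hd : d ≠ 0) (ht : t ≠ 0) :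
    (P / (-d)) / (Q / d) = -((P / t) / (Q / t)) := by
  rcases eq_or_ne Q 0 with h | h
  · simp [h]
  · field_simp

/-- the slope of the curve `𝒞_{i,l}` at `t = 0`. -/
theorem stmt3 (E : Subgroup V3ˣ) (hE : IsUnitLattice E) (g₁ g₂ : V3ˣ)
    (hfree : FreeRank2FinIndex E g₁ g₂) (g : V3)
    (hg : g = (g₁ : V3) ∨ g = (g₂ : V3)) (l : ℕ) (hl : 1 ≤ l)
    (hD : (2 * g 1 ^ l - g 0 ^ l - g 2 ^ l) * Real.log ((g₂ : V3) 0) -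
        (2 * g 0 ^ l - g 1 ^ l - g 2 ^ l) * Real.log ((g₂ : V3) 1) ≠ 0) :
    Filter.Tendsto
      (fun t : ℝ => yC (g₁ : V3) (g₂ : V3) g l t / xC (g₁ : V3) (g₂ : V3) g l t)
      (nhdsWithin 0 (Set.Ioi 0))
      (nhds (-(((2 * g 1 ^ l - g 0 ^ l - g 2 ^ l) * Real.log ((g₁ : V3) 0) -
          (2 * g 0 ^ l - g 1 ^ l - g 2 ^ l) * Real.log ((g₁ : V3) 1)) /
        ((2 * g 1 ^ l - g 0 ^ l - g 2 ^ l) * Real.log ((g₂ : V3) 0) -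
          (2 * g 0 ^ l - g 1 ^ l - g 2 ^ l) * Real.log ((g₂ : V3) 1))))) := by
  have hd := keyD E hE g₁ g₂ hfree
  set a : ℝ := ((g ^ l : V3) 1 - 1) -
      (((g ^ l : V3) 0 - 1) + ((g ^ l : V3) 1 - 1) + ((g ^ l : V3) 2 - 1)) / 3 with ha
  set b : ℝ := ((g ^ l : V3) 0 - 1) -
      (((g ^ l : V3) 0 - 1) + ((g ^ l : V3) 1 - 1) + ((g ^ l : V3) 2 - 1)) / 3 with hb
  have hpow : ∀ j : Fin 3, (g ^ l : V3) j = g j ^ l := fun j => Pi.pow_apply g l j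
  have h3a : 2 * g 1 ^ l - g 0 ^ l - g 2 ^ l = 3 * a := by
    rw [ha, hpow 0, hpow 1, hpow 2]; ring
  have h3b : 2 * g 0 ^ l - g 1 ^ l - g 2 ^ l = 3 * b := by
    rw [hb, hpow 0, hpow 1, hpow 2]; ring
  have hQ : a * Real.log ((g₂ : V3) 0) - b * Real.log ((g₂ : V3) 1) ≠ 0 := by
    intro h
    apply hD
    rw [h3a, h3b]
    linear_combination (3:ℝ) * h
  have hA : Tendsto (fun t => logHc (seg (g ^ l) t) 1 / t)
      (nhdsWithin (0:ℝ) (Ioi 0)) (nhds a) := by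
    rw [ha]; exact slopeA (g ^ l) 1
  have hB : Tendsto (fun t => logHc (seg (g ^ l) t) 0 / t)
      (nhdsWithin (0:ℝ) (Ioi 0)) (nhds b) := by
    rw [hb]; exact slopeA (g ^ l) 0
  have hF : Tendsto (fun t => logHc (seg (g ^ l) t) 1 / t * Real.log ((g₁ : V3) 0) -
        logHc (seg (g ^ l) t) 0 / t * Real.log ((g₁ : V3) 1))
      (nhdsWithin (0:ℝ) (Ioi 0))
      (nhds (a * Real.log ((g₁ : V3) 0) - b * Real.log ((g₁ : V3) 1))) :=
    (hA.mul_const _).sub (hB.mul_const _)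
  have hG : Tendsto (fun t => logHc (seg (g ^ l) t) 1 / t * Real.log ((g₂ : V3) 0) -
        logHc (seg (g ^ l) t) 0 / t * Real.log ((g₂ : V3) 1))
      (nhdsWithin (0:ℝ) (Ioi 0))
      (nhds (a * Real.log ((g₂ : V3) 0) - b * Real.log ((g₂ : V3) 1))) :=
    (hA.mul_const _).sub (hB.mul_const _)
  have hmain := (hF.div hG hQ).neg
  rw [h3a, h3b,
    show 3 * a * Real.log ((g₁ : V3) 0) - 3 * b * Real.log ((g₁ : V3) 1) =
      3 * (a * Real.log ((g₁ : V3) 0) - b * Real.log ((g₁ : V3) 1)) from by ring,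
    show 3 * a * Real.log ((g₂ : V3) 0) - 3 * b * Real.log ((g₂ : V3) 1) =
      3 * (a * Real.log ((g₂ : V3) 0) - b * Real.log ((g₂ : V3) 1)) from by ring,
    mul_div_mul_left _ _ (by norm_num : (3:ℝ) ≠ 0)]
  refine Tendsto.congr' ?_ hmain
  filter_upwards [self_mem_nhdsWithin] with t ht
  have ht0 : (t:ℝ) ≠ 0 := ne_of_gt ht
  simp only [yC, xC, phi, Pi.div_apply]
  set A := logHc (seg (g ^ l) t) 1 with hA'
  set B := logHc (seg (g ^ l) t) 0 with hB'
  rw [show A / t * Real.log ((g₁ : V3) 0) - B / t * Real.log ((g₁ : V3) 1) =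
      (A * Real.log ((g₁ : V3) 0) - B * Real.log ((g₁ : V3) 1)) / t from by ring,
    show A / t * Real.log ((g₂ : V3) 0) - B / t * Real.log ((g₂ : V3) 1) =
      (A * Real.log ((g₂ : V3) 0) - B * Real.log ((g₂ : V3) 1)) / t from by ring,
    show Real.log ((g₁ : V3) 0) * Real.log ((g₂ : V3) 1) -
        Real.log ((g₁ : V3) 1) * Real.log ((g₂ : V3) 0) =
      -(Real.log ((g₂ : V3) 0) * Real.log ((g₁ : V3) 1) -
        Real.log ((g₂ : V3) 1) * Real.log ((g₁ : V3) 0)) from by ring]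
  exact (quot_eq _ _ _ t hd ht0).symm
end
end

section
/- Let a₁, a₂, b₁, b₂ be positive real numbers with a₂ > a₁⁻² > a₁⁻¹ > 1 and b₁ < b₂ < 1, and set a₃ = (a₁a₂)⁻¹ and b₃ = (b₁b₂)⁻¹. Then, as l → ∞ through the positive integers: (1) −[(2a₂^l − a₁^l − a₃^l)·log a₁ − (2a₁^l − a₂^l − a₃^l)·log a₂] / [(2a₂^l − a₁^l − a₃^l)·log b₁ − (2a₁^l − a₂^l − a₃^l)·log b₂] converges to −(2·log a₁ + log a₂)/(2·log b₁ + log b₂), and this limit is strictly positive; (2) −[(2a₂^{−l} − a₁^{−l} − a₃^{−l})·log a₁ − (2a₁^{−l} − a₂^{−l} − a₃^{−l})·log a₂] / [(2a₂^{−l} − a₁^{−l} − a₃^{−l})·log b₁ − (2a₁^{−l} − a₂^{−l} − a₃^{−l})·log b₂] converges to −(−log a₁ + log a₂)/(−log b₁ + log b₂), and this limit is strictly negative. -/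
noncomputable section

open Filter Real

private lemma aux_tendsto (a₁ a₂ b₁ b₂ : ℝ) (u v : ℕ → ℝ) (U V : ℝ)
    (hu : Tendsto u atTop (nhds U)) (hv : Tendsto v atTop (nhds V))
    (hden : U * Real.log b₁ - V * Real.log b₂ ≠ 0) :
    Tendsto (fun l => -((u l * Real.log a₁ - v l * Real.log a₂) /
        (u l * Real.log b₁ - v l * Real.log b₂))) atTop
      (nhds (-((U * Real.log a₁ - V * Real.log a₂) /
        (U * Real.log b₁ - V * Real.log b₂)))) :=
  (((hu.mul_const _).sub (hv.mul_const _)).div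
    ((hu.mul_const _).sub (hv.mul_const _)) hden).neg

/-- limits, as `l → ∞`, of the slopes of the curve `𝒞_{1,l}` at
`t = 0` and `t = 1`, where `a_j = σ_j(g₁)`, `b_j = σ_j(g₂)`,
`a₃ = (a₁a₂)⁻¹` and `b₃ = (b₁b₂)⁻¹`. -/
theorem stmt5 (a₁ a₂ b₁ b₂ : ℝ) (ha₁ : 0 < a₁) (ha₂ : 0 < a₂) (hb₁ : 0 < b₁)
    (hb₂ : 0 < b₂) (ha : a₂ > (a₁⁻¹) ^ 2) (ha' : (a₁⁻¹) ^ 2 > a₁⁻¹) (ha'' : a₁⁻¹ > 1)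
    (hb : b₁ < b₂) (hb' : b₂ < 1) :
    (Filter.Tendsto (fun l : ℕ =>
        -(((2 * a₂ ^ l - a₁ ^ l - ((a₁ * a₂)⁻¹) ^ l) * Real.log a₁ -
              (2 * a₁ ^ l - a₂ ^ l - ((a₁ * a₂)⁻¹) ^ l) * Real.log a₂) /
          ((2 * a₂ ^ l - a₁ ^ l - ((a₁ * a₂)⁻¹) ^ l) * Real.log b₁ -
              (2 * a₁ ^ l - a₂ ^ l - ((a₁ * a₂)⁻¹) ^ l) * Real.log b₂)))
        Filter.atTop
        (nhds (-((2 * Real.log a₁ + Real.log a₂) / (2 * Real.log b₁ + Real.log b₂)))) ∧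
      0 < -((2 * Real.log a₁ + Real.log a₂) / (2 * Real.log b₁ + Real.log b₂))) ∧
    (Filter.Tendsto (fun l : ℕ =>
        -(((2 * (a₂ ^ l)⁻¹ - (a₁ ^ l)⁻¹ - (((a₁ * a₂)⁻¹) ^ l)⁻¹) * Real.log a₁ -
              (2 * (a₁ ^ l)⁻¹ - (a₂ ^ l)⁻¹ - (((a₁ * a₂)⁻¹) ^ l)⁻¹) * Real.log a₂) /
          ((2 * (a₂ ^ l)⁻¹ - (a₁ ^ l)⁻¹ - (((a₁ * a₂)⁻¹) ^ l)⁻¹) * Real.log b₁ -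
              (2 * (a₁ ^ l)⁻¹ - (a₂ ^ l)⁻¹ - (((a₁ * a₂)⁻¹) ^ l)⁻¹) * Real.log b₂)))
        Filter.atTop
        (nhds (-((-Real.log a₁ + Real.log a₂) / (-Real.log b₁ + Real.log b₂)))) ∧
      -((-Real.log a₁ + Real.log a₂) / (-Real.log b₁ + Real.log b₂)) < 0) := by
  have ha₁' : a₁ ≠ 0 := ha₁.ne'
  have ha₂' : a₂ ≠ 0 := ha₂.ne'
  have hinv : a₁ * a₁⁻¹ = 1 := mul_inv_cancel₀ ha₁'
  have ha1lt : a₁ < 1 := by nlinarith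
  have ha2gt : 1 < a₂ := by nlinarith
  have h12 : 1 < a₁ * a₂ := by nlinarith [sq_nonneg a₁⁻¹, mul_pos ha₁ ha₂]
  have h12pos : 0 < a₁ * a₂ := lt_trans one_pos h12
  have hLa₁ : Real.log a₁ < 0 := Real.log_neg ha₁ ha1lt
  have hLa₂ : 0 < Real.log a₂ := Real.log_pos ha2gt
  have hLb₂ : Real.log b₂ < 0 := Real.log_neg hb₂ hb'
  have hLb : Real.log b₁ < Real.log b₂ := Real.log_lt_log hb₁ hb
  have hnum1 : 0 < 2 * Real.log a₁ + Real.log a₂ := by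
    have h := Real.log_lt_log (by positivity) ha
    rw [Real.log_pow, Real.log_inv] at h
    push_cast at h
    linarith
  have hden1 : 2 * Real.log b₁ + Real.log b₂ < 0 := by linarith
  constructor
  · constructor
    · -- part 1 tendsto
      have h1 : (0:ℝ) ≤ a₁ / a₂ := by positivity
      have h2 : a₁ / a₂ < 1 := (div_lt_one ha₂).mpr (by linarith)
      have h3 : (0:ℝ) ≤ (a₁ * a₂)⁻¹ / a₂ := by positivity
      have h4 : (a₁ * a₂)⁻¹ / a₂ < 1 := (div_lt_one ha₂).mpr
        (lt_trans (inv_lt_one_of_one_lt₀ h12) ha2gt)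
      have t1 : Tendsto (fun l : ℕ => (a₁ / a₂) ^ l) atTop (nhds 0) :=
        tendsto_pow_atTop_nhds_zero_of_lt_one h1 h2
      have t2 : Tendsto (fun l : ℕ => ((a₁ * a₂)⁻¹ / a₂) ^ l) atTop (nhds 0) :=
        tendsto_pow_atTop_nhds_zero_of_lt_one h3 h4
      have hu : Tendsto (fun l : ℕ => 2 - (a₁ / a₂) ^ l - ((a₁ * a₂)⁻¹ / a₂) ^ l)
          atTop (nhds 2) := by
        have := ((tendsto_const_nhds (x := (2:ℝ))).sub t1).sub t2
        simpa using this
      have hv : Tendsto (fun l : ℕ => 2 * (a₁ / a₂) ^ l - 1 - ((a₁ * a₂)⁻¹ / a₂) ^ l)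
          atTop (nhds (-1)) := by
        have := ((t1.const_mul 2).sub (tendsto_const_nhds (x := (1:ℝ)))).sub t2
        simpa using this
      have key := aux_tendsto a₁ a₂ b₁ b₂ _ _ 2 (-1) hu hv
        (by rw [neg_one_mul, sub_neg_eq_add]; linarith)
      have key2 : Filter.Tendsto (fun l : ℕ =>
          -(((2 - (a₁ / a₂) ^ l - ((a₁ * a₂)⁻¹ / a₂) ^ l) * Real.log a₁ -
                (2 * (a₁ / a₂) ^ l - 1 - ((a₁ * a₂)⁻¹ / a₂) ^ l) * Real.log a₂) /
            ((2 - (a₁ / a₂) ^ l - ((a₁ * a₂)⁻¹ / a₂) ^ l) * Real.log b₁ -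
                (2 * (a₁ / a₂) ^ l - 1 - ((a₁ * a₂)⁻¹ / a₂) ^ l) * Real.log b₂)))
          Filter.atTop
          (nhds (-((2 * Real.log a₁ + Real.log a₂) / (2 * Real.log b₁ + Real.log b₂)))) := by
        convert key using 2 <;> ring
      refine key2.congr fun l => ?_
      have hc : (a₂:ℝ) ^ l ≠ 0 := (pow_pos ha₂ l).ne'
      have e : ∀ x y : ℝ,
            (2 * a₂ ^ l - a₁ ^ l - ((a₁ * a₂)⁻¹) ^ l) * x -
              (2 * a₁ ^ l - a₂ ^ l - ((a₁ * a₂)⁻¹) ^ l) * y =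
            a₂ ^ l * ((2 - (a₁ / a₂) ^ l - ((a₁ * a₂)⁻¹ / a₂) ^ l) * x -
              (2 * (a₁ / a₂) ^ l - 1 - ((a₁ * a₂)⁻¹ / a₂) ^ l) * y) := by
        intro x y
        simp only [div_pow, inv_pow, mul_pow]
        field_simp
      rw [e, e, mul_div_mul_left _ _ hc]
    · exact neg_pos.mpr (div_neg_of_pos_of_neg hnum1 hden1)
  · constructor
    · -- part 2 tendsto
      have hgt1 : 1 < a₂ * (a₁ * a₂) := one_lt_mul_of_lt_of_le ha2gt h12.le
      have hgt2 : 1 < a₁ * (a₁ * a₂) := by nlinarith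
      have h1 : (0:ℝ) ≤ (a₂ * (a₁ * a₂))⁻¹ := by positivity
      have h2 : (a₂ * (a₁ * a₂))⁻¹ < 1 := inv_lt_one_of_one_lt₀ hgt1
      have h3 : (0:ℝ) ≤ (a₁ * (a₁ * a₂))⁻¹ := by positivity
      have h4 : (a₁ * (a₁ * a₂))⁻¹ < 1 := inv_lt_one_of_one_lt₀ hgt2
      have t1 : Tendsto (fun l : ℕ => ((a₂ * (a₁ * a₂))⁻¹) ^ l) atTop (nhds 0) :=
        tendsto_pow_atTop_nhds_zero_of_lt_one h1 h2
      have t2 : Tendsto (fun l : ℕ => ((a₁ * (a₁ * a₂))⁻¹) ^ l) atTop (nhds 0) :=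
        tendsto_pow_atTop_nhds_zero_of_lt_one h3 h4
      have hu : Tendsto
          (fun l : ℕ => 2 * ((a₂ * (a₁ * a₂))⁻¹) ^ l - ((a₁ * (a₁ * a₂))⁻¹) ^ l - 1)
          atTop (nhds (-1)) := by
        have := ((t1.const_mul 2).sub t2).sub (tendsto_const_nhds (x := (1:ℝ)))
        simpa using this
      have hv : Tendsto
          (fun l : ℕ => 2 * ((a₁ * (a₁ * a₂))⁻¹) ^ l - ((a₂ * (a₁ * a₂))⁻¹) ^ l - 1)
          atTop (nhds (-1)) := by
        have := ((t2.const_mul 2).sub t1).sub (tendsto_const_nhds (x := (1:ℝ)))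
        simpa using this
      have key := aux_tendsto a₁ a₂ b₁ b₂ _ _ (-1) (-1) hu hv
        (by rw [neg_one_mul, neg_one_mul, sub_neg_eq_add]; intro h; linarith [hLb])
      have key2 : Filter.Tendsto (fun l : ℕ =>
          -(((2 * ((a₂ * (a₁ * a₂))⁻¹) ^ l - ((a₁ * (a₁ * a₂))⁻¹) ^ l - 1) * Real.log a₁ -
                (2 * ((a₁ * (a₁ * a₂))⁻¹) ^ l - ((a₂ * (a₁ * a₂))⁻¹) ^ l - 1) * Real.log a₂) /
            ((2 * ((a₂ * (a₁ * a₂))⁻¹) ^ l - ((a₁ * (a₁ * a₂))⁻¹) ^ l - 1) * Real.log b₁ -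
                (2 * ((a₁ * (a₁ * a₂))⁻¹) ^ l - ((a₂ * (a₁ * a₂))⁻¹) ^ l - 1) * Real.log b₂)))
          Filter.atTop
          (nhds (-((-Real.log a₁ + Real.log a₂) / (-Real.log b₁ + Real.log b₂)))) := by
        convert key using 2 <;> ring
      refine key2.congr fun l => ?_
      have hc : (a₁ * a₂ : ℝ) ^ l ≠ 0 := (pow_pos h12pos l).ne'
      have e : ∀ x y : ℝ,
            (2 * (a₂ ^ l)⁻¹ - (a₁ ^ l)⁻¹ - (((a₁ * a₂)⁻¹) ^ l)⁻¹) * x -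
              (2 * (a₁ ^ l)⁻¹ - (a₂ ^ l)⁻¹ - (((a₁ * a₂)⁻¹) ^ l)⁻¹) * y =
            (a₁ * a₂) ^ l *
              ((2 * ((a₂ * (a₁ * a₂))⁻¹) ^ l - ((a₁ * (a₁ * a₂))⁻¹) ^ l - 1) * x -
               (2 * ((a₁ * (a₁ * a₂))⁻¹) ^ l - ((a₂ * (a₁ * a₂))⁻¹) ^ l - 1) * y) := by
        intro x y
        simp only [div_pow, inv_pow, mul_pow]
        field_simp
      rw [e, e, mul_div_mul_left _ _ hc]
    · have : 0 < (-Real.log a₁ + Real.log a₂) / (-Real.log b₁ + Real.log b₂) :=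
        div_pos (by linarith) (by linarith)
      linarith
end
end

section
/- There exists R′ > 0 with the following property: for all r > R′ and M > 2⁵·r, if g₁, g₂ ∈ E₊(𝔣) generate a free rank-2 finite-index subgroup of E₊(𝔣) and Log(g_i) ∈ B(l_i(M), r) for i = 1,2, then for every integer l ≥ 1: (1) ⟨g₁^l, g₂^l⟩ is a free subgroup of E₊(𝔣) of rank 2 and of finite index; (2) δ([g₁^l | g₂^l]) = −δ([g₂^l | g₁^l]) = 1. -/
noncomputable section

open Filter Set

private lemma gapmul (L d : ℝ) (hL : 1 ≤ L) (hd : 2 ≤ d) : 2 ≤ L * d := by nlinarith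

private lemma key3 (t1 t2 t3 s : ℝ) (h1 : t1 + 2 ≤ s) (h2 : t2 + 2 ≤ s) (h3 : t3 + 2 ≤ s) :
    Real.exp t1 + Real.exp t2 + Real.exp t3 < Real.exp s := by
  have h5 : (5:ℝ) < Real.exp 2 := by
    have he : Real.exp 2 = Real.exp 1 * Real.exp 1 := by
      rw [← Real.exp_add]; norm_num
    nlinarith [Real.exp_one_gt_d9]
  have key : ∀ t : ℝ, t + 2 ≤ s → Real.exp t < Real.exp s / 5 := by
    intro t ht
    rw [lt_div_iff₀ (by norm_num : (0:ℝ) < 5)]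
    have : Real.exp t * Real.exp 2 = Real.exp (t + 2) := (Real.exp_add t 2).symm
    nlinarith [Real.exp_pos t, Real.exp_le_exp.mpr ht]
  linarith [key _ h1, key _ h2, key _ h3, Real.exp_pos s]

private lemma main_pos (L r M u0 u1 u2 v0 v1 v2 : ℝ) (hL : 1 ≤ L) (hr : 1 < r)
    (hM : 2 ^ 5 * r < M)
    (hu0 : |u0 - (-M/2)| < r) (hu1 : |u1 - M| < r) (hu2 : |u2 - (-M/2)| < r)
    (hv0 : |v0 - (-M/2)| < r) (hv1 : |v1 - (-M/2)| < r) (hv2 : |v2 - M| < r) :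
    0 < Real.exp (L*u1) * Real.exp (L*u2) * (Real.exp (L*v2) - Real.exp (L*v1))
      + Real.exp (L*u0) * Real.exp (L*u2) * (Real.exp (L*v0) - Real.exp (L*v2))
      + Real.exp (L*u0) * Real.exp (L*u1) * (Real.exp (L*v1) - Real.exp (L*v0)) := by
  obtain ⟨hu0a, hu0b⟩ := abs_lt.mp hu0
  obtain ⟨hu1a, hu1b⟩ := abs_lt.mp hu1
  obtain ⟨hu2a, hu2b⟩ := abs_lt.mp hu2
  obtain ⟨hv0a, hv0b⟩ := abs_lt.mp hv0
  obtain ⟨hv1a, hv1b⟩ := abs_lt.mp hv1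
  obtain ⟨hv2a, hv2b⟩ := abs_lt.mp hv2
  have hg1 : L*u1 + L*u2 + L*v1 + 2 ≤ L*u1 + L*u2 + L*v2 := by
    have := gapmul L (v2 - v1) hL (by linarith); nlinarith
  have hg2 : L*u0 + L*u2 + L*v2 + 2 ≤ L*u1 + L*u2 + L*v2 := by
    have := gapmul L (u1 - u0) hL (by linarith); nlinarith
  have hg3 : L*u0 + L*u1 + L*v0 + 2 ≤ L*u1 + L*u2 + L*v2 := by
    have := gapmul L ((u2 - u0) + (v2 - v0)) hL (by linarith); nlinarith
  have hk := key3 _ _ _ _ hg1 hg2 hg3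
  have p1 := Real.exp_pos (L*u0 + L*u2 + L*v0)
  have p2 := Real.exp_pos (L*u0 + L*u1 + L*v1)
  have expand : Real.exp (L*u1) * Real.exp (L*u2) * (Real.exp (L*v2) - Real.exp (L*v1))
      + Real.exp (L*u0) * Real.exp (L*u2) * (Real.exp (L*v0) - Real.exp (L*v2))
      + Real.exp (L*u0) * Real.exp (L*u1) * (Real.exp (L*v1) - Real.exp (L*v0))
      = Real.exp (L*u1 + L*u2 + L*v2) - Real.exp (L*u1 + L*u2 + L*v1)
        + Real.exp (L*u0 + L*u2 + L*v0) - Real.exp (L*u0 + L*u2 + L*v2)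
        + Real.exp (L*u0 + L*u1 + L*v1) - Real.exp (L*u0 + L*u1 + L*v0) := by
    simp only [mul_sub, ← Real.exp_add]; ring
  rw [expand]; linarith

private lemma main_neg (L r M u0 u1 u2 v0 v1 v2 : ℝ) (hL : 1 ≤ L) (hr : 1 < r)
    (hM : 2 ^ 5 * r < M)
    (hu0 : |u0 - (-M/2)| < r) (hu1 : |u1 - M| < r) (hu2 : |u2 - (-M/2)| < r)
    (hv0 : |v0 - (-M/2)| < r) (hv1 : |v1 - (-M/2)| < r) (hv2 : |v2 - M| < r) :
    Real.exp (L*v1) * Real.exp (L*v2) * (Real.exp (L*u2) - Real.exp (L*u1))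
      + Real.exp (L*v0) * Real.exp (L*v2) * (Real.exp (L*u0) - Real.exp (L*u2))
      + Real.exp (L*v0) * Real.exp (L*v1) * (Real.exp (L*u1) - Real.exp (L*u0)) < 0 := by
  obtain ⟨hu0a, hu0b⟩ := abs_lt.mp hu0
  obtain ⟨hu1a, hu1b⟩ := abs_lt.mp hu1
  obtain ⟨hu2a, hu2b⟩ := abs_lt.mp hu2
  obtain ⟨hv0a, hv0b⟩ := abs_lt.mp hv0
  obtain ⟨hv1a, hv1b⟩ := abs_lt.mp hv1
  obtain ⟨hv2a, hv2b⟩ := abs_lt.mp hv2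
  have hg1 : L*v1 + L*v2 + L*u2 + 2 ≤ L*v1 + L*v2 + L*u1 := by
    have := gapmul L (u1 - u2) hL (by linarith); nlinarith
  have hg2 : L*v0 + L*v2 + L*u0 + 2 ≤ L*v1 + L*v2 + L*u1 := by
    have := gapmul L ((v1 - v0) + (u1 - u0)) hL (by linarith); nlinarith
  have hg3 : L*v0 + L*v1 + L*u1 + 2 ≤ L*v1 + L*v2 + L*u1 := by
    have := gapmul L (v2 - v0) hL (by linarith); nlinarith
  have hk := key3 _ _ _ _ hg1 hg2 hg3
  have p1 := Real.exp_pos (L*v0 + L*v2 + L*u2)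
  have p2 := Real.exp_pos (L*v0 + L*v1 + L*u0)
  have expand : Real.exp (L*v1) * Real.exp (L*v2) * (Real.exp (L*u2) - Real.exp (L*u1))
      + Real.exp (L*v0) * Real.exp (L*v2) * (Real.exp (L*u0) - Real.exp (L*u2))
      + Real.exp (L*v0) * Real.exp (L*v1) * (Real.exp (L*u1) - Real.exp (L*u0))
      = Real.exp (L*v1 + L*v2 + L*u2) - Real.exp (L*v1 + L*v2 + L*u1)
        + Real.exp (L*v0 + L*v2 + L*u0) - Real.exp (L*v0 + L*v2 + L*u2)
        + Real.exp (L*v0 + L*v1 + L*u1) - Real.exp (L*v0 + L*v1 + L*u0) := by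
    simp only [mul_sub, ← Real.exp_add]; ring
  rw [expand]; linarith

private lemma deltaB_expand (x y : V3) :
    deltaB x y = Real.sign (x 1 * x 2 * (y 2 - y 1) + x 0 * x 2 * (y 0 - y 2)
      + x 0 * x 1 * (y 1 - y 0)) := by
  unfold deltaB delta3
  congr 1
  simp [Matrix.det_fin_three, Pi.mul_apply]
  ring

private lemma pow_closure_relindex {G : Type*} [CommGroup G] (a b : G) (l : ℕ) (hl : 1 ≤ l) :
    (Subgroup.closure {a ^ l, b ^ l}).relIndex (Subgroup.closure {a, b}) ≠ 0 := by
  have hl' : NeZero l := ⟨by omega⟩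
  set K := Subgroup.closure ({a, b} : Set G) with hK
  set H := (Subgroup.closure ({a ^ l, b ^ l} : Set G)).subgroupOf K with hH
  have hmem : ∀ m n : ℕ, a ^ m * b ^ n ∈ K := by
    intro m n
    exact mul_mem (pow_mem (Subgroup.subset_closure (by simp)) m)
      (pow_mem (Subgroup.subset_closure (by simp)) n)
  have hfin : Finite (K ⧸ H) := by
    apply Finite.of_surjective (fun p : ZMod l × ZMod l =>
      (QuotientGroup.mk (⟨a ^ (p.1.val) * b ^ (p.2.val), hmem _ _⟩ : K) : K ⧸ H))
    intro q
    induction q using QuotientGroup.induction_on with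
    | H x =>
      obtain ⟨m, n, hmn⟩ := Subgroup.mem_closure_pair.mp x.2
      refine ⟨((m : ZMod l), (n : ZMod l)), ?_⟩
      have hm : ∃ k : ℤ, m = (((m : ZMod l).val : ℤ)) + l * k := by
        have : ((m - ((m : ZMod l).val : ℤ) : ℤ) : ZMod l) = 0 := by
          push_cast [ZMod.natCast_val, ZMod.intCast_cast, ZMod.cast_id]
          ring
        obtain ⟨k, hk⟩ := (ZMod.intCast_zmod_eq_zero_iff_dvd _ _).mp this
        exact ⟨k, by omega⟩
      have hn : ∃ k : ℤ, n = (((n : ZMod l).val : ℤ)) + l * k := by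
        have : ((n - ((n : ZMod l).val : ℤ) : ℤ) : ZMod l) = 0 := by
          push_cast [ZMod.natCast_val, ZMod.intCast_cast, ZMod.cast_id]
          ring
        obtain ⟨k, hk⟩ := (ZMod.intCast_zmod_eq_zero_iff_dvd _ _).mp this
        exact ⟨k, by omega⟩
      obtain ⟨k₁, hk₁⟩ := hm
      obtain ⟨k₂, hk₂⟩ := hn
      set p := (m : ZMod l).val with hp
      set q := (n : ZMod l).val with hq
      apply (QuotientGroup.eq (s := H)).mpr
      simp only [hH, Subgroup.mem_subgroupOf]
      have key : ((⟨a ^ p * b ^ q, hmem _ _⟩ : K)⁻¹ * x : G)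
          = (a ^ l) ^ k₁ * (b ^ l) ^ k₂ := by
        have hx : (x : G) = a ^ m * b ^ n := hmn.symm
        have ha : a ^ m = a ^ p * (a ^ l) ^ k₁ := by
          rw [hk₁, zpow_add, zpow_natCast, zpow_mul, zpow_natCast]
        have hb : b ^ n = b ^ q * (b ^ l) ^ k₂ := by
          rw [hk₂, zpow_add, zpow_natCast, zpow_mul, zpow_natCast]
        push_cast
        rw [hx, ha, hb, mul_mul_mul_comm, inv_mul_cancel_left]
      rw [show (((⟨a ^ p * b ^ q, hmem _ _⟩ : K))⁻¹ * x : K)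
        = (⟨(a ^ l) ^ k₁ * (b ^ l) ^ k₂, by rw [← key]; exact mul_mem (inv_mem (hmem _ _)) x.2⟩ : K)
        from Subtype.ext key]
      exact mul_mem (zpow_mem (Subgroup.subset_closure (by simp)) k₁)
        (zpow_mem (Subgroup.subset_closure (by simp)) k₂)
  exact Subgroup.index_ne_zero_of_finite

/-- Proposition 6.8 of the paper: powers of a well-chosen pair of
units again generate a free rank-2 finite-index subgroup with the right signs. -/
theorem stmt7 (E : Subgroup V3ˣ) (hE : IsUnitLattice E) :
    ∃ R' : ℝ, 0 < R' ∧ ∀ r : ℝ, r > R' → ∀ M : ℝ, M > 2 ^ 5 * r →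
      ∀ g₁ g₂ : V3ˣ, FreeRank2FinIndex E g₁ g₂ →
        Log3 (g₁ : V3) ∈ Metric.ball (lvec 1 M) r →
        Log3 (g₂ : V3) ∈ Metric.ball (lvec 2 M) r →
        ∀ l : ℕ, 1 ≤ l →
          FreeRank2FinIndex E (g₁ ^ l) (g₂ ^ l) ∧
          deltaB ((g₁ : V3) ^ l) ((g₂ : V3) ^ l) = 1 ∧
          deltaB ((g₂ : V3) ^ l) ((g₁ : V3) ^ l) = -1 := by
  refine ⟨1, one_pos, ?_⟩
  intro r hr M hM g₁ g₂ hfree hb1 hb2 l hl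
  obtain ⟨hg1E, hg2E, hrel, hind⟩ := hfree
  have hr0 : (0:ℝ) < r := lt_trans one_pos hr
  have hp1 : ∀ i, 0 < (g₁ : V3) i := hE.1 g₁ hg1E
  have hp2 : ∀ i, 0 < (g₂ : V3) i := hE.1 g₂ hg2E
  rw [Metric.mem_ball, dist_pi_lt_iff hr0] at hb1 hb2
  have hu0 : |Real.log ((g₁:V3) 0) - (-M/2)| < r := by
    simpa [Log3, lvec, Real.dist_eq] using hb1 0
  have hu1 : |Real.log ((g₁:V3) 1) - M| < r := by
    simpa [Log3, lvec, Real.dist_eq] using hb1 1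
  have hu2 : |Real.log ((g₁:V3) 2) - (-M/2)| < r := by
    simpa [Log3, lvec, Real.dist_eq] using hb1 2
  have hv0 : |Real.log ((g₂:V3) 0) - (-M/2)| < r := by
    simpa [Log3, lvec, Real.dist_eq] using hb2 0
  have hv1 : |Real.log ((g₂:V3) 1) - (-M/2)| < r := by
    simpa [Log3, lvec, Real.dist_eq] using hb2 1
  have hv2 : |Real.log ((g₂:V3) 2) - M| < r := by
    simpa [Log3, lvec, Real.dist_eq] using hb2 2
  have hL : (1:ℝ) ≤ (l:ℝ) := by exact_mod_cast hl
  have hlz : (l:ℤ) ≠ 0 := by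
    have := Nat.one_le_iff_ne_zero.mp hl
    exact_mod_cast this
  have hx1 : ∀ i : Fin 3, ((g₁:V3) ^ l) i = Real.exp ((l:ℝ) * Real.log ((g₁:V3) i)) := by
    intro i
    rw [Real.exp_nat_mul, Real.exp_log (hp1 i), Pi.pow_apply]
  have hx2 : ∀ i : Fin 3, ((g₂:V3) ^ l) i = Real.exp ((l:ℝ) * Real.log ((g₂:V3) i)) := by
    intro i
    rw [Real.exp_nat_mul, Real.exp_log (hp2 i), Pi.pow_apply]
  refine ⟨⟨pow_mem hg1E l, pow_mem hg2E l, ?_, ?_⟩, ?_, ?_⟩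
  · intro m n h
    rw [← zpow_natCast g₁ l, ← zpow_natCast g₂ l, ← zpow_mul, ← zpow_mul] at h
    obtain ⟨h1, h2⟩ := hrel _ _ h
    exact ⟨(mul_eq_zero.mp h1).resolve_left hlz, (mul_eq_zero.mp h2).resolve_left hlz⟩
  · have hle1 : Subgroup.closure ({g₁ ^ l, g₂ ^ l} : Set V3ˣ) ≤ Subgroup.closure {g₁, g₂} := by
      rw [Subgroup.closure_le]
      rintro x hx
      simp only [Set.mem_insert_iff, Set.mem_singleton_iff] at hx
      rcases hx with rfl | rfl
      · exact pow_mem (Subgroup.subset_closure (by simp)) l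
      · exact pow_mem (Subgroup.subset_closure (by simp)) l
    have hle2 : Subgroup.closure ({g₁, g₂} : Set V3ˣ) ≤ E := by
      rw [Subgroup.closure_le]
      rintro x hx
      simp only [Set.mem_insert_iff, Set.mem_singleton_iff] at hx
      rcases hx with rfl | rfl
      · exact hg1E
      · exact hg2E
    rw [← Subgroup.relIndex_mul_relIndex _ _ E hle1 hle2]
    exact Nat.mul_ne_zero (pow_closure_relindex g₁ g₂ l hl) hind
  · rw [deltaB_expand, hx1 0, hx1 1, hx1 2, hx2 0, hx2 1, hx2 2]
    exact Real.sign_of_pos (main_pos (l:ℝ) r M _ _ _ _ _ _ hL hr hM hu0 hu1 hu2 hv0 hv1 hv2)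
  · rw [deltaB_expand, hx1 0, hx1 1, hx1 2, hx2 0, hx2 1, hx2 2]
    exact Real.sign_of_neg (main_neg (l:ℝ) r M _ _ _ _ _ _ hL hr hM hu0 hu1 hu2 hv0 hv1 hv2)
end
end

section
/- Suppose g₁, g₂ ∈ E₊(𝔣) generate a free rank-2 finite-index subgroup of E₊(𝔣), that δ([g₁^m | g₂^m]) = −δ([g₂^m | g₁^m]) = 1 for every integer m ≥ 1, and that σ₂(g₁) > σ₁(g₁)⁻² > σ₁(g₁)⁻¹ > 1 and σ₁(g₂) < σ₂(g₂) < 1. Then there exists L₁ > 0 such that for every integer l > L₁ and every t ∈ [0,1]: (i) y_{1,l}(t) ≥ 0; (ii) x_{2,l}(t) ≤ 0; (iii) 0 ≤ x_{1,l}(t) ≤ l; (iv) 0 ≤ y_{2,l}(t) ≤ l. -/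
noncomputable section
/-! Auxiliary lemmas for `stmt8`. -/

private lemma Lpos {t x : ℝ} (ht0 : 0 ≤ t) (ht1 : t ≤ 1) (hx : 0 < x) :
    0 < 1 + t * (x - 1) := by
  rcases eq_or_lt_of_le ht0 with h | h
  · simp [← h]
  · nlinarith [mul_pos h hx]

private lemma Ls_mono {t x y : ℝ} (ht0 : 0 ≤ t) (ht1 : t ≤ 1) (hx : 0 < x) (hxy : x ≤ y) :
    Real.log (1 + t * (x - 1)) ≤ Real.log (1 + t * (y - 1)) := by
  have hy : 0 < y := lt_of_lt_of_le hx hxy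
  exact (Real.log_le_log_iff (Lpos ht0 ht1 hx) (Lpos ht0 ht1 hy)).mpr
    (by nlinarith [mul_nonneg ht0 (sub_nonneg.mpr hxy)])

private lemma Ls_nonpos {t x : ℝ} (ht0 : 0 ≤ t) (ht1 : t ≤ 1) (hx : 0 < x) (hx1 : x ≤ 1) :
    Real.log (1 + t * (x - 1)) ≤ 0 :=
  Real.log_nonpos (le_of_lt (Lpos ht0 ht1 hx))
    (by nlinarith [mul_nonneg ht0 (sub_nonneg.mpr hx1)])

private lemma Ls_nonneg {t x : ℝ} (ht0 : 0 ≤ t) (hx1 : 1 ≤ x) :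
    0 ≤ Real.log (1 + t * (x - 1)) :=
  Real.log_nonneg (by nlinarith [mul_nonneg ht0 (sub_nonneg.mpr hx1)])

/-- `x ↦ log(1+t(x-1)) - log x` is antitone. -/
private lemma Ls_sub {t x y : ℝ} (ht0 : 0 ≤ t) (ht1 : t ≤ 1) (hx : 0 < x) (hxy : x ≤ y) :
    Real.log (1 + t * (y - 1)) - Real.log y ≤ Real.log (1 + t * (x - 1)) - Real.log x := by
  have hy : 0 < y := lt_of_lt_of_le hx hxy
  have h1 : x * (1 + t * (y - 1)) ≤ y * (1 + t * (x - 1)) := by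
    nlinarith [mul_nonneg (sub_nonneg.mpr hxy) (sub_nonneg.mpr ht1)]
  have h2 : Real.log (x * (1 + t * (y - 1))) ≤ Real.log (y * (1 + t * (x - 1))) :=
    (Real.log_le_log_iff (mul_pos hx (Lpos ht0 ht1 hy)) (mul_pos hy (Lpos ht0 ht1 hx))).mpr h1
  rw [Real.log_mul hx.ne' (Lpos ht0 ht1 hy).ne', Real.log_mul hy.ne' (Lpos ht0 ht1 hx).ne'] at h2
  linarith

/-- Convexity of `ξ ↦ log(1 - t + t·eξ)` in combination form. -/
private lemma Ls_combo {t Y Z p q : ℝ} (ht0 : 0 ≤ t) (ht1 : t ≤ 1) (hY : 0 < Y) (hZ : 0 < Z)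
    (hp : 0 ≤ p) (hq : 0 ≤ q) (hpq : p + q = 1) :
    Real.log (1 + t * (Y ^ p * Z ^ q - 1)) ≤
      p * Real.log (1 + t * (Y - 1)) + q * Real.log (1 + t * (Z - 1)) := by
  rcases eq_or_lt_of_le ht0 with h0 | h0
  · simp [← h0]
  rcases eq_or_lt_of_le ht1 with h1 | h1
  · subst h1
    rw [show (1:ℝ) + 1 * (Y ^ p * Z ^ q - 1) = Y ^ p * Z ^ q by ring,
      show (1:ℝ) + 1 * (Y - 1) = Y by ring, show (1:ℝ) + 1 * (Z - 1) = Z by ring,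
      Real.log_mul (Real.rpow_pos_of_pos hY p).ne' (Real.rpow_pos_of_pos hZ q).ne',
      Real.log_rpow hY, Real.log_rpow hZ]
  have h1t : 0 < 1 - t := by linarith
  have hS : 0 < 1 + t * (Y - 1) := Lpos ht0 ht1 hY
  have hT : 0 < 1 + t * (Z - 1) := Lpos ht0 ht1 hZ
  set S := 1 + t * (Y - 1) with hSdef
  set T := 1 + t * (Z - 1) with hTdef
  have htY : 0 < t * Y := mul_pos h0 hY
  have htZ : 0 < t * Z := mul_pos h0 hZ
  have hSP : 0 < S ^ p := Real.rpow_pos_of_pos hS p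
  have hTQ : 0 < T ^ q := Real.rpow_pos_of_pos hT q
  have key : (t*Y)^p * (t*Z)^q + (1-t)^p * (1-t)^q ≤ S^p * T^q := by
    have g1 := Real.geom_mean_le_arith_mean2_weighted hp hq
      (le_of_lt (div_pos htY hS)) (le_of_lt (div_pos htZ hT)) hpq
    have g2 := Real.geom_mean_le_arith_mean2_weighted hp hq
      (le_of_lt (div_pos h1t hS)) (le_of_lt (div_pos h1t hT)) hpq
    rw [Real.div_rpow htY.le hS.le, Real.div_rpow htZ.le hT.le, div_mul_div_comm,
      div_le_iff₀ (mul_pos hSP hTQ)] at g1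
    rw [Real.div_rpow h1t.le hS.le, Real.div_rpow h1t.le hT.le, div_mul_div_comm,
      div_le_iff₀ (mul_pos hSP hTQ)] at g2
    have eS : t*Y/S + (1-t)/S = 1 := by
      rw [← add_div, show t*Y + (1-t) = S from by rw [hSdef]; ring]
      exact div_self hS.ne'
    have eT : t*Z/T + (1-t)/T = 1 := by
      rw [← add_div, show t*Z + (1-t) = T from by rw [hTdef]; ring]
      exact div_self hT.ne'
    have hsum : (p*(t*Y/S) + q*(t*Z/T)) + (p*((1-t)/S) + q*((1-t)/T)) = 1 := by
      have e : (p*(t*Y/S) + q*(t*Z/T)) + (p*((1-t)/S) + q*((1-t)/T))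
          = p*(t*Y/S + (1-t)/S) + q*(t*Z/T + (1-t)/T) := by ring
      rw [e, eS, eT, mul_one, mul_one]; exact hpq
    calc (t*Y)^p * (t*Z)^q + (1-t)^p * (1-t)^q
        ≤ (p*(t*Y/S) + q*(t*Z/T))*(S^p*T^q) + (p*((1-t)/S) + q*((1-t)/T))*(S^p*T^q) :=
          add_le_add g1 g2
      _ = ((p*(t*Y/S) + q*(t*Z/T)) + (p*((1-t)/S) + q*((1-t)/T))) * (S^p*T^q) := by ring
      _ = S^p * T^q := by rw [hsum, one_mul]
  have harg : 1 + t * (Y ^ p * Z ^ q - 1) = (t*Y)^p * (t*Z)^q + (1-t)^p * (1-t)^q := by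
    have e1 : (t*Y)^p * (t*Z)^q = t * (Y^p * Z^q) := by
      rw [Real.mul_rpow ht0 hY.le, Real.mul_rpow ht0 hZ.le]
      have ht' : t^p * t^q = t := by rw [← Real.rpow_add h0, hpq, Real.rpow_one]
      calc t^p * Y^p * (t^q * Z^q) = (t^p * t^q) * (Y^p * Z^q) := by ring
        _ = t * (Y^p * Z^q) := by rw [ht']
    have e2 : (1-t)^p * (1-t)^q = 1 - t := by
      rw [← Real.rpow_add h1t, hpq, Real.rpow_one]
    rw [e1, e2]; ring
  have hpos : 0 < (t*Y)^p * (t*Z)^q + (1-t)^p * (1-t)^q := by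
    have := Real.rpow_pos_of_pos htY p
    have := Real.rpow_pos_of_pos htZ q
    have := Real.rpow_pos_of_pos h1t p
    have := Real.rpow_pos_of_pos h1t q
    positivity
  calc Real.log (1 + t * (Y ^ p * Z ^ q - 1))
      = Real.log ((t*Y)^p * (t*Z)^q + (1-t)^p * (1-t)^q) := by rw [harg]
    _ ≤ Real.log (S^p * T^q) := (Real.log_le_log_iff hpos (mul_pos hSP hTQ)).mpr key
    _ = p * Real.log S + q * Real.log T := by
        rw [Real.log_mul hSP.ne' hTQ.ne', Real.log_rpow hS, Real.log_rpow hT]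
/-- Curve 1, `y`-coordinate numerator: convexity argument. -/
private lemma coreG1 {t : ℝ} (r A B : ℝ) (ht0 : 0 ≤ t) (ht1 : t ≤ 1)
    (hA : A < 0) (hAB : 0 < 2*A + B) :
    0 ≤ (2*A+B) * Real.log (1 + t * (Real.exp (r*B) - 1))
      - (A+2*B) * Real.log (1 + t * (Real.exp (r*A) - 1))
      + (B-A) * Real.log (1 + t * (Real.exp (r*(-A-B)) - 1)) := by
  have hB : 0 < B := by linarith
  have hBA : 0 < B - A := by linarith
  have hA2B : 0 < A + 2*B := by linarith
  have hp : 0 ≤ (2*A+B)/(A+2*B) := div_nonneg hAB.le hA2B.le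
  have hq : 0 ≤ (B-A)/(A+2*B) := div_nonneg hBA.le hA2B.le
  have hpq : (2*A+B)/(A+2*B) + (B-A)/(A+2*B) = 1 := by
    rw [← add_div]
    rw [show 2*A+B + (B-A) = A+2*B by ring]
    exact div_self hA2B.ne'
  have hcomb := Ls_combo (Y := Real.exp (r*B)) (Z := Real.exp (r*(-A-B)))
    ht0 ht1 (Real.exp_pos _) (Real.exp_pos _) hp hq hpq
  have hYZ : (Real.exp (r*B)) ^ ((2*A+B)/(A+2*B)) * (Real.exp (r*(-A-B))) ^ ((B-A)/(A+2*B))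
      = Real.exp (r*A) := by
    rw [Real.rpow_def_of_pos (Real.exp_pos _), Real.rpow_def_of_pos (Real.exp_pos _),
      Real.log_exp, Real.log_exp, ← Real.exp_add]
    congr 1
    rw [mul_div_assoc', mul_div_assoc', ← add_div, div_eq_iff hA2B.ne']
    ring
  rw [hYZ] at hcomb
  have hmul := mul_le_mul_of_nonneg_left hcomb hA2B.le
  have hp' : (A+2*B) * ((2*A+B)/(A+2*B)) = 2*A+B := by field_simp
  have hq' : (A+2*B) * ((B-A)/(A+2*B)) = B-A := by field_simp
  have h2 : (A+2*B) * ((2*A+B)/(A+2*B) * Real.log (1 + t * (Real.exp (r*B) - 1))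
        + (B-A)/(A+2*B) * Real.log (1 + t * (Real.exp (r*(-A-B)) - 1)))
      = (2*A+B) * Real.log (1 + t * (Real.exp (r*B) - 1))
        + (B-A) * Real.log (1 + t * (Real.exp (r*(-A-B)) - 1)) := by
    rw [mul_add, ← mul_assoc, ← mul_assoc, hp', hq']
  rw [h2] at hmul
  linarith

/-- Curve 2, `x`-coordinate numerator: convexity argument. -/
private lemma coreG4 {t : ℝ} (r C D : ℝ) (ht0 : 0 ≤ t) (ht1 : t ≤ 1)
    (hCD : C < D) (hD : D < 0) :
    0 ≤ (2*C+D) * Real.log (1 + t * (Real.exp (r*D) - 1))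
      - (C+2*D) * Real.log (1 + t * (Real.exp (r*C) - 1))
      + (D-C) * Real.log (1 + t * (Real.exp (r*(-C-D)) - 1)) := by
  have hC : C < 0 := lt_trans hCD hD
  have h2CD : 2*C+D < 0 := by linarith
  have hC2D : C+2*D < 0 := by linarith
  have hn : 0 < -(2*C+D) := by linarith
  have hp : 0 ≤ (C+2*D)/(2*C+D) := le_of_lt (div_pos_iff.mpr (Or.inr ⟨hC2D, h2CD⟩))
  have hq : 0 ≤ (C-D)/(2*C+D) := le_of_lt (div_pos_iff.mpr (Or.inr ⟨by linarith, h2CD⟩))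
  have hpq : (C+2*D)/(2*C+D) + (C-D)/(2*C+D) = 1 := by
    rw [← add_div]
    rw [show C+2*D + (C-D) = 2*C+D by ring]
    exact div_self h2CD.ne
  have hcomb := Ls_combo (Y := Real.exp (r*C)) (Z := Real.exp (r*(-C-D)))
    ht0 ht1 (Real.exp_pos _) (Real.exp_pos _) hp hq hpq
  have hYZ : (Real.exp (r*C)) ^ ((C+2*D)/(2*C+D)) * (Real.exp (r*(-C-D))) ^ ((C-D)/(2*C+D))
      = Real.exp (r*D) := by
    rw [Real.rpow_def_of_pos (Real.exp_pos _), Real.rpow_def_of_pos (Real.exp_pos _),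
      Real.log_exp, Real.log_exp, ← Real.exp_add]
    congr 1
    rw [mul_div_assoc', mul_div_assoc', ← add_div, div_eq_iff h2CD.ne]
    ring
  rw [hYZ] at hcomb
  have hmul := mul_le_mul_of_nonneg_left hcomb hn.le
  have hp' : (-(2*C+D)) * ((C+2*D)/(2*C+D)) = -(C+2*D) := by field_simp [h2CD.ne]
  have hq' : (-(2*C+D)) * ((C-D)/(2*C+D)) = -(C-D) := by field_simp [h2CD.ne]
  have h2 : (-(2*C+D)) * ((C+2*D)/(2*C+D) * Real.log (1 + t * (Real.exp (r*C) - 1))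
        + (C-D)/(2*C+D) * Real.log (1 + t * (Real.exp (r*(-C-D)) - 1)))
      = (-(C+2*D)) * Real.log (1 + t * (Real.exp (r*C) - 1))
        + (-(C-D)) * Real.log (1 + t * (Real.exp (r*(-C-D)) - 1)) := by
    rw [mul_add, ← mul_assoc, ← mul_assoc, hp', hq']
  rw [h2] at hmul
  linarith

/-- Curve 1, `x`-coordinate numerator is nonpositive. -/
private lemma coreG2 {t : ℝ} (r A B C D : ℝ) (ht0 : 0 ≤ t) (ht1 : t ≤ 1) (hr : 0 ≤ r)
    (hA : A < 0) (hAB : 0 < 2*A + B) (hCD : C < D) (hD : D < 0) :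
    (2*C+D) * Real.log (1 + t * (Real.exp (r*B) - 1))
      - (C+2*D) * Real.log (1 + t * (Real.exp (r*A) - 1))
      + (D-C) * Real.log (1 + t * (Real.exp (r*(-A-B)) - 1)) ≤ 0 := by
  have hC : C < 0 := lt_trans hCD hD
  have hB : 0 < B := by linarith
  have hrA : r * A ≤ 0 := by nlinarith
  have hrB : 0 ≤ r * B := mul_nonneg hr hB.le
  have hrAB : r * (-A-B) ≤ 0 := by nlinarith
  have hu : Real.log (1 + t * (Real.exp (r*A) - 1)) ≤ 0 :=
    Ls_nonpos ht0 ht1 (Real.exp_pos _) (Real.exp_le_one_iff.mpr hrA)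
  have hv : 0 ≤ Real.log (1 + t * (Real.exp (r*B) - 1)) :=
    Ls_nonneg ht0 (Real.one_le_exp hrB)
  have hw : Real.log (1 + t * (Real.exp (r*(-A-B)) - 1)) ≤ 0 :=
    Ls_nonpos ht0 ht1 (Real.exp_pos _) (Real.exp_le_one_iff.mpr hrAB)
  nlinarith [mul_nonneg (show (0:ℝ) ≤ -(2*C+D) by linarith) hv,
    mul_nonneg (show (0:ℝ) ≤ -(C+2*D) by linarith) (neg_nonneg.mpr hu),
    mul_nonneg (show (0:ℝ) ≤ D - C by linarith) (neg_nonneg.mpr hw)]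

/-- Curve 1, `x`-coordinate numerator lower bound. -/
private lemma coreG3 {t : ℝ} (r A B C D : ℝ) (ht0 : 0 ≤ t) (ht1 : t ≤ 1) (hr : 0 ≤ r)
    (hA : A < 0) (hAB : 0 < 2*A + B) (hCD : C < D) (hD : D < 0) :
    3*r*(C*B - D*A) ≤ (2*C+D) * Real.log (1 + t * (Real.exp (r*B) - 1))
      - (C+2*D) * Real.log (1 + t * (Real.exp (r*A) - 1))
      + (D-C) * Real.log (1 + t * (Real.exp (r*(-A-B)) - 1)) := by
  have hC : C < 0 := lt_trans hCD hD
  have hB : 0 < B := by linarith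
  have hrA : r * A ≤ 0 := by nlinarith
  have hrB : 0 ≤ r * B := mul_nonneg hr hB.le
  have hrAB : r * (-A-B) ≤ 0 := by nlinarith
  have hone : Real.log (1 + t * ((1:ℝ) - 1)) = 0 := by norm_num
  have hF0 := Ls_sub (x := Real.exp (r*A)) (y := 1) ht0 ht1 (Real.exp_pos _)
    (Real.exp_le_one_iff.mpr hrA)
  rw [hone, Real.log_one, Real.log_exp] at hF0
  have hF1 := Ls_sub (x := 1) (y := Real.exp (r*B)) ht0 ht1 one_pos (Real.one_le_exp hrB)
  rw [hone, Real.log_one, Real.log_exp] at hF1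
  have hF2 := Ls_sub (x := Real.exp (r*(-A-B))) (y := 1) ht0 ht1 (Real.exp_pos _)
    (Real.exp_le_one_iff.mpr hrAB)
  rw [hone, Real.log_one, Real.log_exp] at hF2
  nlinarith [mul_nonneg (show (0:ℝ) ≤ -(C+2*D) by linarith)
      (show (0:ℝ) ≤ Real.log (1 + t * (Real.exp (r*A) - 1)) - r*A by linarith),
    mul_nonneg (show (0:ℝ) ≤ -(2*C+D) by linarith)
      (show (0:ℝ) ≤ r*B - Real.log (1 + t * (Real.exp (r*B) - 1)) by linarith),
    mul_nonneg (show (0:ℝ) ≤ D - C by linarith)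
      (show (0:ℝ) ≤ Real.log (1 + t * (Real.exp (r*(-A-B)) - 1)) - r*(-A-B) by linarith)]

/-- Curve 2, `y`-coordinate numerator is nonnegative. -/
private lemma coreG5 {t : ℝ} (r A B C D : ℝ) (ht0 : 0 ≤ t) (ht1 : t ≤ 1) (hr : 0 ≤ r)
    (hA : A < 0) (hAB : 0 < 2*A + B) (hCD : C < D) (hD : D < 0) :
    0 ≤ (2*A+B) * Real.log (1 + t * (Real.exp (r*D) - 1))
      - (A+2*B) * Real.log (1 + t * (Real.exp (r*C) - 1))
      + (B-A) * Real.log (1 + t * (Real.exp (r*(-C-D)) - 1)) := by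
  have hC : C < 0 := lt_trans hCD hD
  have hB : 0 < B := by linarith
  have hrD : r * D ≤ 0 := by nlinarith
  have hrCD : 0 ≤ r * (-C-D) := by nlinarith
  have huv : Real.log (1 + t * (Real.exp (r*C) - 1))
      ≤ Real.log (1 + t * (Real.exp (r*D) - 1)) :=
    Ls_mono ht0 ht1 (Real.exp_pos _) (Real.exp_le_exp.mpr (by nlinarith))
  have hv : Real.log (1 + t * (Real.exp (r*D) - 1)) ≤ 0 :=
    Ls_nonpos ht0 ht1 (Real.exp_pos _) (Real.exp_le_one_iff.mpr hrD)
  have hw : 0 ≤ Real.log (1 + t * (Real.exp (r*(-C-D)) - 1)) :=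
    Ls_nonneg ht0 (Real.one_le_exp hrCD)
  nlinarith [mul_nonneg (show (0:ℝ) ≤ A+2*B by linarith)
      (sub_nonneg.mpr huv),
    mul_nonneg (show (0:ℝ) ≤ B - A by linarith)
      (show (0:ℝ) ≤ Real.log (1 + t * (Real.exp (r*(-C-D)) - 1))
        - Real.log (1 + t * (Real.exp (r*D) - 1)) by linarith)]

/-- Curve 2, `y`-coordinate numerator upper bound. -/
private lemma coreG6 {t : ℝ} (r A B C D : ℝ) (ht0 : 0 ≤ t) (ht1 : t ≤ 1) (hr : 0 ≤ r)
    (hA : A < 0) (hAB : 0 < 2*A + B) (hCD : C < D) (hD : D < 0) :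
    (2*A+B) * Real.log (1 + t * (Real.exp (r*D) - 1))
      - (A+2*B) * Real.log (1 + t * (Real.exp (r*C) - 1))
      + (B-A) * Real.log (1 + t * (Real.exp (r*(-C-D)) - 1)) ≤ 3*r*(A*D - B*C) := by
  have hC : C < 0 := lt_trans hCD hD
  have hB : 0 < B := by linarith
  have hrC : r * C ≤ 0 := by nlinarith
  have hrD : r * D ≤ 0 := by nlinarith
  have hrCD : 0 ≤ r * (-C-D) := by nlinarith
  have hone : Real.log (1 + t * ((1:ℝ) - 1)) = 0 := by norm_num
  have hF01 := Ls_sub (x := Real.exp (r*C)) (y := Real.exp (r*D)) ht0 ht1 (Real.exp_pos _)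
    (Real.exp_le_exp.mpr (by nlinarith))
  rw [Real.log_exp, Real.log_exp] at hF01
  have hF1 := Ls_sub (x := Real.exp (r*D)) (y := 1) ht0 ht1 (Real.exp_pos _)
    (Real.exp_le_one_iff.mpr hrD)
  rw [hone, Real.log_one, Real.log_exp] at hF1
  have hF2 := Ls_sub (x := 1) (y := Real.exp (r*(-C-D))) ht0 ht1 one_pos
    (Real.one_le_exp hrCD)
  rw [hone, Real.log_one, Real.log_exp] at hF2
  nlinarith [mul_nonneg (show (0:ℝ) ≤ A+2*B by linarith)
      (show (0:ℝ) ≤ (Real.log (1 + t * (Real.exp (r*C) - 1)) - r*C)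
        - (Real.log (1 + t * (Real.exp (r*D) - 1)) - r*D) by linarith),
    mul_nonneg (show (0:ℝ) ≤ B - A by linarith)
      (show (0:ℝ) ≤ Real.log (1 + t * (Real.exp (r*D) - 1)) - r*D by linarith),
    mul_nonneg (show (0:ℝ) ≤ B - A by linarith)
      (show (0:ℝ) ≤ r*(-C-D) - Real.log (1 + t * (Real.exp (r*(-C-D)) - 1)) by linarith)]

open Filter Set

/-- Corollary 6.9 of the paper: control of the curves `𝒞_{1,l}` and
`𝒞_{2,l}` for large `l`. -/
theorem stmt8 (E : Subgroup V3ˣ) (hE : IsUnitLattice E) (g₁ g₂ : V3ˣ)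
    (hfree : FreeRank2FinIndex E g₁ g₂)
    (hsign : ∀ m : ℕ, 1 ≤ m →
      deltaB ((g₁ : V3) ^ m) ((g₂ : V3) ^ m) = 1 ∧
      deltaB ((g₂ : V3) ^ m) ((g₁ : V3) ^ m) = -1)
    (hg₁ : (g₁ : V3) 1 > ((g₁ : V3) 0)⁻¹ ^ 2 ∧ ((g₁ : V3) 0)⁻¹ ^ 2 > ((g₁ : V3) 0)⁻¹ ∧
      ((g₁ : V3) 0)⁻¹ > 1)
    (hg₂ : (g₂ : V3) 0 < (g₂ : V3) 1 ∧ (g₂ : V3) 1 < 1) :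
    ∃ L₁ : ℝ, 0 < L₁ ∧ ∀ l : ℕ, (l : ℝ) > L₁ → ∀ t ∈ Set.Icc (0 : ℝ) 1,
      0 ≤ yC (g₁ : V3) (g₂ : V3) (g₁ : V3) l t ∧
      xC (g₁ : V3) (g₂ : V3) (g₂ : V3) l t ≤ 0 ∧
      0 ≤ xC (g₁ : V3) (g₂ : V3) (g₁ : V3) l t ∧
      xC (g₁ : V3) (g₂ : V3) (g₁ : V3) l t ≤ l ∧
      0 ≤ yC (g₁ : V3) (g₂ : V3) (g₂ : V3) l t ∧
      yC (g₁ : V3) (g₂ : V3) (g₂ : V3) l t ≤ l := by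
  obtain ⟨hEpos, hEnorm, -⟩ := hE
  obtain ⟨hg1E, hg2E, -, -⟩ := hfree
  have hp1 : IsPos (g₁ : V3) := hEpos _ hg1E
  have hp2 : IsPos (g₂ : V3) := hEpos _ hg2E
  have hn1 := hEnorm _ hg1E
  have hn2 := hEnorm _ hg2E
  simp only [Log3] at hn1 hn2
  -- basic sign facts
  have hg10lt1 : (g₁ : V3) 0 < 1 := by
    nlinarith [mul_inv_cancel₀ (ne_of_gt (hp1 0)), hg₁.2.2, hp1 0,
      mul_pos (hp1 0) (sub_pos.mpr hg₁.2.2)]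
  have hA : Real.log ((g₁ : V3) 0) < 0 := Real.log_neg (hp1 0) hg10lt1
  have hAB : 0 < 2 * Real.log ((g₁ : V3) 0) + Real.log ((g₁ : V3) 1) := by
    have h := Real.log_lt_log (pow_pos (inv_pos.mpr (hp1 0)) 2) hg₁.1
    rw [Real.log_pow, Real.log_inv] at h
    push_cast at h
    linarith
  have hCD : Real.log ((g₂ : V3) 0) < Real.log ((g₂ : V3) 1) := Real.log_lt_log (hp2 0) hg₂.1
  have hD : Real.log ((g₂ : V3) 1) < 0 := Real.log_neg (hp2 1) hg₂.2
  have hC : Real.log ((g₂ : V3) 0) < 0 := lt_trans hCD hD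
  have hB : 0 < Real.log ((g₁ : V3) 1) := by linarith
  -- denominators
  have hDx : Real.log ((g₂ : V3) 0) * Real.log ((g₁ : V3) 1)
      - Real.log ((g₂ : V3) 1) * Real.log ((g₁ : V3) 0) < 0 := by
    nlinarith [mul_pos_of_neg_of_neg hD hA, mul_neg_of_neg_of_pos hC hB]
  have hDy : 0 < Real.log ((g₁ : V3) 0) * Real.log ((g₂ : V3) 1)
      - Real.log ((g₁ : V3) 1) * Real.log ((g₂ : V3) 0) := by
    nlinarith [mul_pos_of_neg_of_neg hA hD, mul_neg_of_pos_of_neg hB hC]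
  refine ⟨1, one_pos, ?_⟩
  intro l hl t ht
  obtain ⟨ht0, ht1⟩ := ht
  have hr : (0:ℝ) ≤ (l : ℝ) := by positivity
  -- rewriting the segment logs
  have hlog : ∀ (g : V3), IsPos g → ∀ j : Fin 3,
      Real.log (seg (g ^ l) t j) = Real.log (1 + t * (Real.exp ((l:ℝ) * Real.log (g j)) - 1)) := by
    intro g hg j
    have h : (g ^ l) j = Real.exp ((l:ℝ) * Real.log (g j)) := by
      rw [Real.exp_nat_mul, Real.exp_log (hg j), Pi.pow_apply]
    simp only [seg, h]
  have hlg12 : Real.log ((g₁ : V3) 2) = -Real.log ((g₁ : V3) 0) - Real.log ((g₁ : V3) 1) := by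
    linarith
  have hlg22 : Real.log ((g₂ : V3) 2) = -Real.log ((g₂ : V3) 0) - Real.log ((g₂ : V3) 1) := by
    linarith
  have key1 := coreG1 ((l:ℝ)) (Real.log ((g₁ : V3) 0)) (Real.log ((g₁ : V3) 1)) ht0 ht1 hA hAB
  have key2 := coreG2 ((l:ℝ)) (Real.log ((g₁ : V3) 0)) (Real.log ((g₁ : V3) 1))
    (Real.log ((g₂ : V3) 0)) (Real.log ((g₂ : V3) 1)) ht0 ht1 hr hA hAB hCD hD
  have key3 := coreG3 ((l:ℝ)) (Real.log ((g₁ : V3) 0)) (Real.log ((g₁ : V3) 1))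
    (Real.log ((g₂ : V3) 0)) (Real.log ((g₂ : V3) 1)) ht0 ht1 hr hA hAB hCD hD
  have key4 := coreG4 ((l:ℝ)) (Real.log ((g₂ : V3) 0)) (Real.log ((g₂ : V3) 1)) ht0 ht1 hCD hD
  have key5 := coreG5 ((l:ℝ)) (Real.log ((g₁ : V3) 0)) (Real.log ((g₁ : V3) 1))
    (Real.log ((g₂ : V3) 0)) (Real.log ((g₂ : V3) 1)) ht0 ht1 hr hA hAB hCD hD
  have key6 := coreG6 ((l:ℝ)) (Real.log ((g₁ : V3) 0)) (Real.log ((g₁ : V3) 1))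
    (Real.log ((g₂ : V3) 0)) (Real.log ((g₂ : V3) 1)) ht0 ht1 hr hA hAB hCD hD
  refine ⟨?_, ?_, ?_, ?_, ?_, ?_⟩
  · -- 0 ≤ y_{1,l}(t)
    simp only [yC, phi, logHc]
    rw [hlog _ hp1, hlog _ hp1, hlog _ hp1, hlg12]
    exact div_nonneg (by linarith) hDy.le
  · -- x_{2,l}(t) ≤ 0
    simp only [xC, phi, logHc]
    rw [hlog _ hp2, hlog _ hp2, hlog _ hp2, hlg22]
    exact div_nonpos_of_nonneg_of_nonpos (by linarith) hDx.le
  · -- 0 ≤ x_{1,l}(t)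
    simp only [xC, phi, logHc]
    rw [hlog _ hp1, hlog _ hp1, hlog _ hp1, hlg12]
    rw [le_div_iff_of_neg hDx]
    linarith [key2]
  · -- x_{1,l}(t) ≤ l
    simp only [xC, phi, logHc]
    rw [hlog _ hp1, hlog _ hp1, hlog _ hp1, hlg12]
    rw [div_le_iff_of_neg hDx]
    linarith [key3]
  · -- 0 ≤ y_{2,l}(t)
    simp only [yC, phi, logHc]
    rw [hlog _ hp2, hlog _ hp2, hlog _ hp2, hlg22]
    exact div_nonneg (by linarith) hDy.le
  · -- y_{2,l}(t) ≤ l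
    simp only [yC, phi, logHc]
    rw [hlog _ hp2, hlog _ hp2, hlog _ hp2, hlg22]
    rw [div_le_iff₀ hDy]
    linarith [key6]
end
end
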